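/- Let p be a prime and N a positive integer whose base-p digit sum is at least 3. Let e₁ = v_p(N) and e₂ = v_p(N − p^{e₁}). Then: (a) N − p^{e₁} − p^{e₂} > 0 and the decomposition N = (N − p^{e₁} − p^{e₂}) + p^{e₂} + p^{e₁} into three positive integers is p-acceptable; and (b) every p-acceptable decomposition N = a + b + c into three positive integers satisfies a, b, c ≤ N − p^{e₁} − p^{e₂}. In other words, the p-threshold of N with respect to k = 3 is N − p^{e₁} − p^{e₂}. -/

import Mathlib

open Finset

/-- helper: divisibility of a remainder -/
lemma aux_dvd_mod {k m n : ℕ} (hm : k ∣ m) (hn : k ∣ n) : k ∣ m % n := by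
  have h := Nat.mod_add_div m n
  have : m % n = m - n * (m / n) := by omega
  rw [this]
  exact Nat.dvd_sub hm (hn.mul_right _)

/-- no-carry at a single modulus iff the sum of remainders is small -/
lemma aux_mod_add_eq_iff {q x y : ℕ} (hq : 0 < q) :
    x % q + y % q = (x + y) % q ↔ x % q + y % q < q := by
  constructor
  · intro h; rw [h]; exact Nat.mod_lt _ hq
  · intro h; rw [Nat.add_mod, Nat.mod_eq_of_lt h]

lemma aux_mod_add_cases {q x y : ℕ} (hq : 0 < q) :
    x % q + y % q = (x + y) % q ∨ x % q + y % q = (x + y) % q + q := by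
  have h1 : (x + y) % q = (x % q + y % q) % q := by rw [Nat.add_mod]
  have h2 : x % q < q := Nat.mod_lt _ hq
  have h3 : y % q < q := Nat.mod_lt _ hq
  rcases lt_or_ge (x % q + y % q) q with h | h
  · left; rw [h1, Nat.mod_eq_of_lt h]
  · right
    have h4 : (x % q + y % q) % q = x % q + y % q - q := by
      rw [Nat.mod_eq_sub_mod h, Nat.mod_eq_of_lt (by omega)]
    omega

/-- Kummer's theorem, reformulated: a prime doesn't divide a binomial coefficient
iff there are no carries, i.e. remainders add up at every power of `p`. -/
lemma aux_kummer {p : ℕ} (hp : p.Prime) (x y : ℕ) :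
    ¬ p ∣ (x + y).choose x ↔ ∀ i, x % p ^ i + y % p ^ i = (x + y) % p ^ i := by
  have hb : Nat.log p (y + x) < x + y + 1 :=
    lt_of_le_of_lt (Nat.log_le_self _ _) (by omega)
  have hmul := Nat.Prime.emultiplicity_choose' (p := p) (n := y) (k := x)
    (b := x + y + 1) hp hb
  rw [add_comm y x] at hmul
  rw [← emultiplicity_eq_zero, hmul, Nat.cast_eq_zero, Finset.card_eq_zero,
    Finset.filter_eq_empty_iff]
  constructor
  · intro h i
    have hq : 0 < p ^ i := pow_pos hp.pos i
    rcases Nat.eq_zero_or_pos i with rfl | hi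
    · simp [Nat.mod_one]
    rcases le_or_gt i (x + y) with hle | hgt
    · have := h (Finset.mem_Ico.mpr ⟨hi, by omega⟩)
      exact (aux_mod_add_eq_iff hq).mpr (by omega)
    · have h2 : x + y < p ^ i := by
        calc x + y < i := hgt
          _ < 2 ^ i := Nat.lt_two_pow_self (n := i)
          _ ≤ p ^ i := Nat.pow_le_pow_left hp.two_le i
      rw [Nat.mod_eq_of_lt (by omega), Nat.mod_eq_of_lt (by omega),
        Nat.mod_eq_of_lt h2]
  · intro h i _
    have hq : 0 < p ^ i := pow_pos hp.pos i
    have := (aux_mod_add_eq_iff hq).mp (h i)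
    omega

/-- multinomial of three as a product of two binomials -/
lemma aux_mult3 (a b c : ℕ) :
    Nat.multinomial Finset.univ ![a, b, c] = (a + b + c).choose a * (b + c).choose b := by
  have h := Nat.multinomial_spec Finset.univ ![a, b, c]
  rw [Fin.prod_univ_three, Fin.sum_univ_three] at h
  simp only [Matrix.cons_val_zero, Matrix.cons_val_one, Matrix.head_cons,
    Matrix.cons_val_two, Matrix.tail_cons] at h
  have h1 : (a + b + c).choose a * (Nat.factorial a) * Nat.factorial (b + c) = Nat.factorial (a + b + c) := by
    have := Nat.choose_mul_factorial_mul_factorial (show a ≤ a + b + c by omega)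
    simpa [show a + b + c - a = b + c by omega] using this
  have h2 : (b + c).choose b * (Nat.factorial b) * (Nat.factorial c) = Nat.factorial (b + c) := by
    have := Nat.choose_mul_factorial_mul_factorial (show b ≤ b + c by omega)
    simpa [show b + c - b = c by omega] using this
  have key : (Nat.factorial a) * (Nat.factorial b) * (Nat.factorial c) * ((a + b + c).choose a * (b + c).choose b)
      = Nat.factorial (a + b + c) := by
    calc (Nat.factorial a) * (Nat.factorial b) * (Nat.factorial c) * ((a + b + c).choose a * (b + c).choose b)
        = (a + b + c).choose a * (Nat.factorial a) * ((b + c).choose b * (Nat.factorial b) * (Nat.factorial c)) := by ring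
      _ = (a + b + c).choose a * (Nat.factorial a) * Nat.factorial (b + c) := by rw [h2]
      _ = Nat.factorial (a + b + c) := h1
  have hpos : 0 < (Nat.factorial a) * (Nat.factorial b) * (Nat.factorial c) := by positivity
  exact Nat.eq_of_mul_eq_mul_left hpos (h.trans key.symm)

lemma aux_sum_digits_pow {p : ℕ} (hp : 1 < p) (e : ℕ) : (p.digits (p ^ e)).sum = 1 := by
  induction e with
  | zero =>
    simp only [pow_zero]
    rw [Nat.digits_def' hp Nat.one_pos]
    simp [Nat.mod_eq_of_lt hp, Nat.div_eq_of_lt hp]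
  | succ n ih =>
    have hpos : 0 < p ^ (n + 1) := pow_pos (by omega) _
    rw [pow_succ, Nat.digits_def' hp (by positivity)]
    simp [Nat.mul_div_cancel_left, Nat.mul_mod_left, ih,
      Nat.mul_div_cancel _ (show 0 < p by omega)]

lemma aux_sum_digits_pow_add_pow {p : ℕ} (hp : 1 < p) :
    ∀ e f : ℕ, e < f → (p.digits (p ^ e + p ^ f)).sum = 2 := by
  intro e
  induction e with
  | zero =>
    intro f hf
    have hpos : 0 < p ^ f := pow_pos (by omega) _
    rw [pow_zero, Nat.digits_def' hp (by omega)]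
    obtain ⟨g, rfl⟩ : ∃ g, f = g + 1 := ⟨f - 1, by omega⟩
    have h1 : (1 + p ^ (g + 1)) % p = 1 := by
      rw [pow_succ, Nat.add_mul_mod_self_right, Nat.mod_eq_of_lt hp]
    have h2 : (1 + p ^ (g + 1)) / p = p ^ g := by
      rw [pow_succ, Nat.add_mul_div_right _ _ (show 0 < p by omega),
        Nat.div_eq_of_lt hp, Nat.zero_add]
    rw [h1, h2]
    simp [aux_sum_digits_pow hp]
  | succ n ih =>
    intro f hf
    obtain ⟨g, rfl⟩ : ∃ g, f = g + 1 := ⟨f - 1, by omega⟩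
    have hkey : p ^ (n + 1) + p ^ (g + 1) = p * (p ^ n + p ^ g) := by ring
    have hpos : 0 < p ^ n + p ^ g := by positivity
    rw [hkey, Nat.digits_def' hp (by positivity)]
    rw [Nat.mul_mod_right, Nat.mul_div_cancel_left _ (show 0 < p by omega)]
    simpa using ih g (by omega)

lemma aux_sum_digits_two_mul_pow {p : ℕ} (hp : 2 < p) (e : ℕ) :
    (p.digits (2 * p ^ e)).sum = 2 := by
  induction e with
  | zero =>
    rw [pow_zero, mul_one, Nat.digits_def' (show 1 < p by omega) (by omega)]
    simp [Nat.mod_eq_of_lt hp, Nat.div_eq_of_lt hp]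
  | succ n ih =>
    have hkey : 2 * p ^ (n + 1) = p * (2 * p ^ n) := by ring
    rw [hkey, Nat.digits_def' (show 1 < p by omega) (by positivity)]
    rw [Nat.mul_mod_right, Nat.mul_div_cancel_left _ (show 0 < p by omega)]
    simpa using ih


lemma aux_mod_eq_zero {q m : ℕ} (h : q ∣ m) : m % q = 0 := by
  obtain ⟨t, rfl⟩ := h; exact Nat.mul_mod_right q t

theorem stmt_17 (p : ℕ) (hp : p.Prime) (N : ℕ) (hN : 0 < N)
    (hdig : 3 ≤ (p.digits N).sum)
    (e₁ e₂ : ℕ) (he₁ : e₁ = N.factorization p) (he₂ : e₂ = (N - p ^ e₁).factorization p) :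
    (0 < N - p ^ e₁ - p ^ e₂ ∧
      ¬ p ∣ Nat.multinomial Finset.univ ![N - p ^ e₁ - p ^ e₂, p ^ e₂, p ^ e₁]) ∧
    (∀ a b c : ℕ, 0 < a → 0 < b → 0 < c → a + b + c = N →
      ¬ p ∣ Nat.multinomial Finset.univ ![a, b, c] →
      a ≤ N - p ^ e₁ - p ^ e₂ ∧ b ≤ N - p ^ e₁ - p ^ e₂ ∧ c ≤ N - p ^ e₁ - p ^ e₂) := by
  have hp1 : 1 < p := hp.one_lt
  have hppos : 0 < p := hp.pos
  have hplt : ∀ i j : ℕ, i < j → p ^ i < p ^ j := fun i j h => Nat.pow_lt_pow_right hp1 h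
  have hP1dvd : p ^ e₁ ∣ N := he₁ ▸ Nat.ordProj_dvd N p
  have hP1ndvd : ¬ p ^ (e₁ + 1) ∣ N := by
    rw [he₁]; exact Nat.pow_succ_factorization_not_dvd hN.ne' hp
  have hP1pos : 0 < p ^ e₁ := pow_pos hppos _
  have hP1le : p ^ e₁ ≤ N := Nat.le_of_dvd hN hP1dvd
  have hNne : N ≠ p ^ e₁ := by
    intro h
    rw [h, aux_sum_digits_pow hp1] at hdig; omega
  set x := N - p ^ e₁ with hxdef
  have hxpos : 0 < x := by omega
  have hP2dvd : p ^ e₂ ∣ x := he₂ ▸ Nat.ordProj_dvd x p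
  have hP2ndvd : ¬ p ^ (e₂ + 1) ∣ x := by
    rw [he₂]; exact Nat.pow_succ_factorization_not_dvd hxpos.ne' hp
  have hP2pos : 0 < p ^ e₂ := pow_pos hppos _
  have hP2le : p ^ e₂ ≤ x := Nat.le_of_dvd hxpos hP2dvd
  have hP1x : p ^ e₁ ∣ x := Nat.dvd_sub hP1dvd dvd_rfl
  have h12 : e₁ ≤ e₂ := by
    rw [he₂]; exact (hp.pow_dvd_iff_le_factorization hxpos.ne').mp hP1x
  have hP12 : p ^ e₁ ≤ p ^ e₂ := Nat.pow_le_pow_right hppos h12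
  have h2p : e₁ = e₂ → 2 < p := by
    intro h
    rcases hp.two_le.lt_or_eq with h' | h'
    · exact h'
    exfalso
    obtain ⟨u, hu⟩ := hP1dvd
    have hu1 : 1 ≤ u := by
      rcases Nat.eq_zero_or_pos u with rfl | h0
      · omega
      · exact h0
    obtain ⟨v, rfl⟩ : ∃ v, u = v + 1 := ⟨u - 1, by omega⟩
    have hxv : x = p ^ e₁ * v := by
      rw [hxdef, hu, show p ^ e₁ * (v + 1) = p ^ e₁ * v + p ^ e₁ by ring]; omega
    have hpu : ¬ p ∣ (v + 1) := by
      intro hd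
      exact hP1ndvd (by rw [hu, pow_succ]; exact Nat.mul_dvd_mul_left _ hd)
    have hpv : ¬ p ∣ v := by
      intro hd
      refine hP2ndvd ?_
      rw [← h, pow_succ, hxv]
      exact Nat.mul_dvd_mul_left _ hd
    rw [Nat.dvd_iff_mod_eq_zero] at hpu hpv
    subst h'
    omega
  have hxne : x ≠ p ^ e₂ := by
    intro h
    have hNeq : N = p ^ e₁ + p ^ e₂ := by omega
    rcases eq_or_lt_of_le h12 with he | he
    · have hgt2 : 2 < p := h2p he
      rw [hNeq, ← he, ← two_mul, aux_sum_digits_two_mul_pow hgt2] at hdig; omega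
    · rw [hNeq, aux_sum_digits_pow_add_pow hp1 e₁ e₂ he] at hdig; omega
  have hMpos : 0 < N - p ^ e₁ - p ^ e₂ := by omega
  have hNdvd : ∀ i ≤ e₁, p ^ i ∣ N := fun i hi => (pow_dvd_pow p hi).trans hP1dvd
  have hedvd : ∀ i ≤ e₂, p ^ i ∣ x := fun i hi => (pow_dvd_pow p hi).trans hP2dvd
  have F2 : ∀ i, e₁ < i → i ≤ e₂ → N % p ^ i = p ^ e₁ := by
    intro i h1 h2
    obtain ⟨t, ht⟩ := hedvd i h2
    have hNx : N = p ^ i * t + p ^ e₁ := by omega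
    rw [hNx, Nat.mul_add_mod, Nat.mod_eq_of_lt (hplt _ _ h1)]
  have Fx : ∀ i, e₂ < i → p ^ e₂ ≤ x % p ^ i ∧ x % p ^ i + p ^ e₂ ≤ p ^ i := by
    intro i hi
    have hqpos : 0 < p ^ i := pow_pos hppos i
    have hd : p ^ e₂ ∣ x % p ^ i := aux_dvd_mod hP2dvd (pow_dvd_pow p hi.le)
    have hne : x % p ^ i ≠ 0 := by
      intro h0
      exact hP2ndvd ((pow_dvd_pow p hi).trans (Nat.dvd_of_mod_eq_zero h0))
    have hlt : x % p ^ i < p ^ i := Nat.mod_lt _ hqpos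
    have hge : p ^ e₂ ≤ x % p ^ i := Nat.le_of_dvd (Nat.pos_of_ne_zero hne) hd
    refine ⟨hge, ?_⟩
    have hpos0 : 0 < p ^ i - x % p ^ i := by
      generalize p ^ i = q at hlt ⊢
      omega
    have hd2 : p ^ e₂ ∣ p ^ i - x % p ^ i := Nat.dvd_sub (pow_dvd_pow p hi.le) hd
    have hle2 := Nat.le_of_dvd hpos0 hd2
    generalize p ^ i = q at hlt hle2 ⊢
    omega
  have F3 : ∀ i, e₂ < i → N % p ^ i = p ^ e₁ + x % p ^ i := by
    intro i hi
    have hqpos : 0 < p ^ i := pow_pos hppos i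
    have hfx := Fx i hi
    have key : (p ^ e₁ + x % p ^ i) % p ^ i = N % p ^ i := by
      conv_rhs => rw [show N = p ^ e₁ + x by omega, Nat.add_mod,
        Nat.mod_eq_of_lt (hplt _ _ (lt_of_le_of_lt h12 hi))]
    have hle : p ^ e₁ + x % p ^ i ≤ p ^ i := by
      have h1 := hfx.1
      have h2 := hfx.2
      generalize p ^ i = q at h1 h2 ⊢
      omega
    rcases hle.lt_or_eq with hlt | heq
    · rw [← key, Nat.mod_eq_of_lt hlt]
    · exfalso
      have h0 : N % p ^ i = 0 := by rw [← key, heq, Nat.mod_self]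
      exact hP1ndvd ((pow_dvd_pow p (show e₁ + 1 ≤ i by omega)).trans
        (Nat.dvd_of_mod_eq_zero h0))
  -- key bound lemma
  have hkey : ∀ a b c : ℕ, 0 < b → 0 < c → a + b + c = N →
      (∀ i, a % p ^ i + (b + c) % p ^ i = N % p ^ i) →
      (∀ i, b % p ^ i + c % p ^ i = (b + c) % p ^ i) →
      p ^ e₁ + p ^ e₂ ≤ b + c := by
    intro a b c hb hc hsum nc1 nc2
    have hN1 : N % p ^ e₁ = 0 := aux_mod_eq_zero hP1dvd
    have hm1 : (b + c) % p ^ e₁ = 0 := by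
      have h := nc1 e₁
      generalize p ^ e₁ = q at h hN1 ⊢
      omega
    have hb1 : p ^ e₁ ∣ b := Nat.dvd_of_mod_eq_zero (by
      have h := nc2 e₁
      have h2 := hm1
      generalize p ^ e₁ = q at h h2 ⊢
      omega)
    have hc1 : p ^ e₁ ∣ c := Nat.dvd_of_mod_eq_zero (by
      have h := nc2 e₁
      have h2 := hm1
      generalize p ^ e₁ = q at h h2 ⊢
      omega)
    have hbge : p ^ e₁ ≤ b := Nat.le_of_dvd hb hb1
    have hcge : p ^ e₁ ≤ c := Nat.le_of_dvd hc hc1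
    rcases eq_or_lt_of_le h12 with he | he
    · rw [← he]; omega
    have hE : a % p ^ (e₁ + 1) + (b + c) % p ^ (e₁ + 1) = p ^ e₁ := by
      have h := nc1 (e₁ + 1)
      rw [F2 (e₁ + 1) (by omega) (by omega)] at h
      exact h
    have hEe₂ : a % p ^ e₂ + (b + c) % p ^ e₂ = p ^ e₁ := by
      have h := nc1 e₂
      rw [F2 e₂ he le_rfl] at h
      exact h
    have hmd : p ^ e₁ ∣ (b + c) % p ^ (e₁ + 1) :=
      aux_dvd_mod (Nat.dvd_add hb1 hc1) (pow_dvd_pow p (by omega))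
    have hcases : (b + c) % p ^ (e₁ + 1) = 0 ∨ (b + c) % p ^ (e₁ + 1) = p ^ e₁ := by
      obtain ⟨t, ht⟩ := hmd
      rw [ht] at hE ⊢
      have ht1 : p ^ e₁ * t ≤ p ^ e₁ * 1 := by
        rw [mul_one]
        generalize p ^ (e₁ + 1) = q at hE
        omega
      have ht2 : t ≤ 1 := Nat.le_of_mul_le_mul_left ht1 hP1pos
      interval_cases t
      · simp
      · right; rw [mul_one]
    rcases hcases with hA | hB
    · -- Case A
      have hmdvd : p ^ (e₁ + 1) ∣ b + c := Nat.dvd_of_mod_eq_zero hA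
      have hd : p ^ (e₁ + 1) ∣ (b + c) % p ^ e₂ :=
        aux_dvd_mod hmdvd (pow_dvd_pow p he)
      have h1 : (b + c) % p ^ e₂ ≤ p ^ e₁ := by
        have h := hEe₂
        generalize p ^ e₂ = q at h ⊢
        omega
      have hm2 : (b + c) % p ^ e₂ = 0 :=
        Nat.eq_zero_of_dvd_of_lt hd (lt_of_le_of_lt h1 (hplt _ _ (Nat.lt_succ_self e₁)))
      have hb2 : p ^ e₂ ∣ b := Nat.dvd_of_mod_eq_zero (by
        have h := nc2 e₂
        have h2 := hm2
        generalize p ^ e₂ = q at h h2 ⊢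
        omega)
      have hc2 : p ^ e₂ ∣ c := Nat.dvd_of_mod_eq_zero (by
        have h := nc2 e₂
        have h2 := hm2
        generalize p ^ e₂ = q at h h2 ⊢
        omega)
      have hb3 := Nat.le_of_dvd hb hb2
      have hc3 := Nat.le_of_dvd hc hc2
      omega
    · -- Case B
      have ha1 : p ^ (e₁ + 1) ∣ a := Nat.dvd_of_mod_eq_zero (by
        have h := hE
        have h2 := hB
        generalize p ^ (e₁ + 1) = q at h h2 ⊢
        omega)
      have hd : p ^ (e₁ + 1) ∣ a % p ^ e₂ := aux_dvd_mod ha1 (pow_dvd_pow p he)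
      have h1 : a % p ^ e₂ ≤ p ^ e₁ := by
        have h := hEe₂
        generalize p ^ e₂ = q at h ⊢
        omega
      have ha0 : a % p ^ e₂ = 0 :=
        Nat.eq_zero_of_dvd_of_lt hd (lt_of_le_of_lt h1 (hplt _ _ (Nat.lt_succ_self e₁)))
      have hm3 : (b + c) % p ^ e₂ = p ^ e₁ := by
        have h := hEe₂
        generalize p ^ e₂ = q at h ha0 ⊢
        omega
      have hdv : p ^ e₂ ∣ (b + c) - p ^ e₁ := hm3 ▸ Nat.dvd_sub_mod (b + c)
      have hpos2 : 0 < b + c - p ^ e₁ := by omega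
      have hfin := Nat.le_of_dvd hpos2 hdv
      omega
  have hsum3 : p ^ e₁ + p ^ e₂ < p ^ (e₂ + 1) := by
    rcases eq_or_lt_of_le h12 with he | he
    · have hgt2 : 2 < p := h2p he
      rw [he, pow_succ]
      nlinarith [pow_pos hppos e₂]
    · have hlt : p ^ e₁ < p ^ e₂ := hplt _ _ he
      rw [pow_succ]
      nlinarith [pow_pos hppos e₂, hp.two_le]
  have G : ∀ i, e₁ < i → i ≤ e₂ → (p ^ e₂ + p ^ e₁) % p ^ i = p ^ e₁ := by
    intro i h1 h2
    obtain ⟨t, ht⟩ := pow_dvd_pow p h2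
    rw [ht, Nat.mul_add_mod, Nat.mod_eq_of_lt (hplt _ _ h1)]
  constructor
  · refine ⟨hMpos, ?_⟩
    rw [aux_mult3]
    have hMsum : N - p ^ e₁ - p ^ e₂ + p ^ e₂ + p ^ e₁ = N := by omega
    rw [hMsum]
    intro hdvd
    rcases (Nat.Prime.dvd_mul hp).mp hdvd with h | h
    · have hNsum : N - p ^ e₁ - p ^ e₂ + (p ^ e₂ + p ^ e₁) = N := by omega
      have hnc : ∀ i, (N - p ^ e₁ - p ^ e₂) % p ^ i + (p ^ e₂ + p ^ e₁) % p ^ i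
          = (N - p ^ e₁ - p ^ e₂ + (p ^ e₂ + p ^ e₁)) % p ^ i := by
        rw [hNsum]
        intro i
        rcases le_or_gt i e₁ with h1 | h1
        · have d1 : p ^ i ∣ N := hNdvd i h1
          have d2 : p ^ i ∣ p ^ e₂ + p ^ e₁ :=
            Nat.dvd_add (pow_dvd_pow p (h1.trans h12)) (pow_dvd_pow p h1)
          have d3 : p ^ i ∣ N - p ^ e₁ - p ^ e₂ := by
            have heq : N - p ^ e₁ - p ^ e₂ = N - (p ^ e₂ + p ^ e₁) := by omega
            rw [heq]; exact Nat.dvd_sub d1 d2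
          rw [aux_mod_eq_zero d1, aux_mod_eq_zero d2, aux_mod_eq_zero d3]
        rcases le_or_gt i e₂ with h2 | h2
        · have dM : p ^ i ∣ N - p ^ e₁ - p ^ e₂ := by
            have heq : N - p ^ e₁ - p ^ e₂ = x - p ^ e₂ := by omega
            rw [heq]; exact Nat.dvd_sub (hedvd i h2) (pow_dvd_pow p h2)
          rw [aux_mod_eq_zero dM, G i h1 h2, F2 i h1 h2, zero_add]
        · have hfx := Fx i h2
          have hf3 := F3 i h2
          have hle : p ^ (e₂ + 1) ≤ p ^ i := Nat.pow_le_pow_right hppos h2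
          have hMeq : (N - p ^ e₁ - p ^ e₂) % p ^ i = x % p ^ i - p ^ e₂ := by
            have h0 := Nat.mod_add_div x (p ^ i)
            have h1' := hfx.1
            have hM : N - p ^ e₁ - p ^ e₂ = p ^ i * (x / p ^ i) + (x % p ^ i - p ^ e₂) := by
              generalize p ^ i = q at h0 h1' ⊢
              omega
            have hlt2 : x % p ^ i - p ^ e₂ < p ^ i := by
              have h2' := hfx.2
              generalize p ^ i = q at h2' ⊢
              omega
            rw [hM, Nat.mul_add_mod, Nat.mod_eq_of_lt hlt2]
          have hmod2 : (p ^ e₂ + p ^ e₁) % p ^ i = p ^ e₂ + p ^ e₁ :=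
            Nat.mod_eq_of_lt (by omega)
          rw [hMeq, hmod2, hf3]
          have h1' := hfx.1
          generalize p ^ i = q at h1' ⊢
          omega
      have k := (aux_kummer hp (N - p ^ e₁ - p ^ e₂) (p ^ e₂ + p ^ e₁)).mpr hnc
      rw [hNsum] at k
      exact k h
    · have hnc2 : ∀ i, p ^ e₂ % p ^ i + p ^ e₁ % p ^ i = (p ^ e₂ + p ^ e₁) % p ^ i := by
        intro i
        rcases le_or_gt i e₁ with h1 | h1
        · rw [aux_mod_eq_zero (pow_dvd_pow p (h1.trans h12)), aux_mod_eq_zero (pow_dvd_pow p h1),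
            aux_mod_eq_zero (Nat.dvd_add (pow_dvd_pow p (h1.trans h12)) (pow_dvd_pow p h1))]
        rcases le_or_gt i e₂ with h2 | h2
        · rw [aux_mod_eq_zero (pow_dvd_pow p h2), Nat.mod_eq_of_lt (hplt _ _ h1),
            G i h1 h2, zero_add]
        · have hle : p ^ (e₂ + 1) ≤ p ^ i := Nat.pow_le_pow_right hppos h2
          rw [Nat.mod_eq_of_lt (show p ^ e₂ < p ^ i by omega),
            Nat.mod_eq_of_lt (show p ^ e₁ < p ^ i by omega),
            Nat.mod_eq_of_lt (show p ^ e₂ + p ^ e₁ < p ^ i by omega)]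
      exact (aux_kummer hp _ _).mpr hnc2 h
  · intro a b c ha hb hc hsum hnd
    rw [aux_mult3] at hnd
    have h1 : ¬ p ∣ (a + b + c).choose a := fun h => hnd (h.mul_right _)
    have h2 : ¬ p ∣ (b + c).choose b := fun h => hnd (h.mul_left _)
    have nc1 : ∀ i, a % p ^ i + (b + c) % p ^ i = N % p ^ i := by
      have hh : ¬ p ∣ (a + (b + c)).choose a := by
        rw [show a + (b + c) = a + b + c by ring]; exact h1
      have hk := (aux_kummer hp a (b + c)).mp hh
      intro i
      rw [← hsum, show a + b + c = a + (b + c) by ring]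
      exact hk i
    have nc2 : ∀ i, b % p ^ i + c % p ^ i = (b + c) % p ^ i := (aux_kummer hp b c).mp h2
    have T : ∀ i, a % p ^ i + b % p ^ i + c % p ^ i = N % p ^ i := by
      intro i
      have t1 := nc1 i
      have t2 := nc2 i
      generalize p ^ i = q at t1 t2 ⊢
      omega
    have pair : ∀ u v : ℕ, (∀ i, u % p ^ i + v % p ^ i + (N - u - v) % p ^ i = N % p ^ i) →
        (∀ i, u % p ^ i + v % p ^ i = (u + v) % p ^ i) := by
      intro u v hT i
      have hq : 0 < p ^ i := pow_pos hppos i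
      rcases aux_mod_add_cases (q := p ^ i) hq (x := u) (y := v) with h | h
      · exact h
      · exfalso
        have hT' := hT i
        have hlt : N % p ^ i < p ^ i := Nat.mod_lt _ hq
        generalize p ^ i = q at h hT' hlt
        omega
    have Tac : ∀ i, a % p ^ i + c % p ^ i + (N - a - c) % p ^ i = N % p ^ i := by
      intro i
      have hbeq : N - a - c = b := by omega
      rw [hbeq]
      have t := T i
      generalize p ^ i = q at t ⊢
      omega
    have Tab : ∀ i, a % p ^ i + b % p ^ i + (N - a - b) % p ^ i = N % p ^ i := by
      intro i
      have hceq : N - a - b = c := by omega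
      rw [hceq]
      have t := T i
      generalize p ^ i = q at t ⊢
      omega
    have ncac : ∀ i, a % p ^ i + c % p ^ i = (a + c) % p ^ i := pair a c Tac
    have ncab : ∀ i, a % p ^ i + b % p ^ i = (a + b) % p ^ i := pair a b Tab
    have ncb : ∀ i, b % p ^ i + (a + c) % p ^ i = N % p ^ i := by
      intro i
      have t1 := ncac i
      have t2 := T i
      generalize p ^ i = q at t1 t2 ⊢
      omega
    have ncc : ∀ i, c % p ^ i + (a + b) % p ^ i = N % p ^ i := by
      intro i
      have t1 := ncab i
      have t2 := T i
      generalize p ^ i = q at t1 t2 ⊢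
      omega
    have hka := hkey a b c hb hc hsum nc1 nc2
    have hkb := hkey b a c ha hc (by omega) ncb ncac
    have hkc := hkey c a b ha hb (by omega) ncc ncab
    omega
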